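/- The map Ψ(z,w,μ) = (z² − μ·conj(w)², z·w + conj(z)·conj(w)·μ, w² − μ·conj(z)²) is injective up to the weighted ℂ*-action: if |z|²+|w|²=1=|z'|²+|w'|², |μ|,|μ'|<1, and there is λ ∈ ℂ* with Ψ(z,w,μ) = (λ^{2a₁}(z'²−μ'conj(w')²), λ^{a₁+a₂}(z'w'+conj(z'w')μ'), λ^{2a₂}(w'²−μ'conj(z')²)), then μ = λ^{2(a₁+a₂)}μ' and (z,w) = ±(λ^{a₁}z', λ^{a₂}w'). -/

import Mathlib

open Complex

private lemma lag_aux (p q a b : ℂ) :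
    normSq (p*a + q*b) + normSq (p * (starRingEnd ℂ) b - q * (starRingEnd ℂ) a)
      = (normSq p + normSq q) * (normSq a + normSq b) := by
  simp only [Complex.normSq_apply, Complex.mul_re, Complex.mul_im, Complex.add_re,
    Complex.add_im, Complex.sub_re, Complex.sub_im, Complex.conj_re, Complex.conj_im]
  ring

/-- The twistor map
`Ψ(z,w,μ) = (z² − μ conj(w)², zw + conj(z)conj(w) μ, w² − μ conj(z)²)` is injective up to the
weighted `ℂ*`-action with weights `(2a₁, a₁+a₂, 2a₂)`: if `|z|²+|w|² = 1 = |z'|²+|w'|²`,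
`|μ|, |μ'| < 1` and `λ ∈ ℂ*` is such that `Ψ(z,w,μ) = λ·Ψ(z',w',μ')` (weighted), then
`μ = λ^{2(a₁+a₂)} μ'` and `(z,w) = ±(λ^{a₁} z', λ^{a₂} w')`. -/
theorem twistor_map_injective (a₁ a₂ : ℕ) (h2 : 0 < a₂) (hle : a₂ ≤ a₁)
    (hcop : Nat.Coprime a₁ a₂)
    (z w z' w' μ μ' lam : ℂ)
    (hs : normSq z + normSq w = 1)
    (hs' : normSq z' + normSq w' = 1)
    (hμ : ‖μ‖ < 1) (hμ' : ‖μ'‖ < 1) (hlam : lam ≠ 0)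
    (h₁ : z^2 - μ * (starRingEnd ℂ) w ^ 2
        = lam ^ (2*a₁) * (z'^2 - μ' * (starRingEnd ℂ) w' ^ 2))
    (h₂ : z*w + (starRingEnd ℂ) z * (starRingEnd ℂ) w * μ
        = lam ^ (a₁+a₂) * (z'*w' + (starRingEnd ℂ) z' * (starRingEnd ℂ) w' * μ'))
    (h₃ : w^2 - μ * (starRingEnd ℂ) z ^ 2
        = lam ^ (2*a₂) * (w'^2 - μ' * (starRingEnd ℂ) z' ^ 2)) :
    μ = lam ^ (2*(a₁+a₂)) * μ' ∧
    ∃ ε : ℂ, (ε = 1 ∨ ε = -1) ∧ z = ε * lam ^ a₁ * z' ∧ w = ε * lam ^ a₂ * w' := by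
  have hsC : z * (starRingEnd ℂ) z + w * (starRingEnd ℂ) w = 1 := by
    rw [Complex.mul_conj, Complex.mul_conj]; norm_cast
  have hs'C : z' * (starRingEnd ℂ) z' + w' * (starRingEnd ℂ) w' = 1 := by
    rw [Complex.mul_conj, Complex.mul_conj]; norm_cast
  -- Part A : the relation between μ and μ'
  have hμeq : μ = lam ^ (2*(a₁+a₂)) * μ' := by
    linear_combination (-(w^2 - μ*((starRingEnd ℂ) z)^2))*h₁
      - lam^(2*a₁)*(z'^2-μ'*((starRingEnd ℂ) w')^2)*h₃
      + (z*w + (starRingEnd ℂ) z*(starRingEnd ℂ) w*μ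
          + lam^(a₁+a₂)*(z'*w'+(starRingEnd ℂ) z'*(starRingEnd ℂ) w'*μ'))*h₂
      - μ*(z*(starRingEnd ℂ) z+w*(starRingEnd ℂ) w+1)*hsC
      + lam^(2*(a₁+a₂))*μ'*(z'*(starRingEnd ℂ) z'+w'*(starRingEnd ℂ) w'+1)*hs'C
  -- Key quadratic identities
  have hKey : (lam^a₁ * (starRingEnd ℂ) z * z' + lam^a₂ * (starRingEnd ℂ) w * w')^2
      - μ' * (lam^a₁ * (starRingEnd ℂ) z * (starRingEnd ℂ) w'
              - lam^a₂ * (starRingEnd ℂ) w * (starRingEnd ℂ) z')^2 = 1 := by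
    linear_combination (-((starRingEnd ℂ) z^2))*h₁ - 2*((starRingEnd ℂ) z)*((starRingEnd ℂ) w)*h₂
      - ((starRingEnd ℂ) w^2)*h₃ + (z*(starRingEnd ℂ) z+w*(starRingEnd ℂ) w+1)*hsC
  have hKey2 : (lam^a₂ * (starRingEnd ℂ) z' * z + lam^a₁ * (starRingEnd ℂ) w' * w)^2
      - μ * (lam^a₂ * (starRingEnd ℂ) z' * (starRingEnd ℂ) w
             - lam^a₁ * (starRingEnd ℂ) w' * (starRingEnd ℂ) z)^2 = lam^(2*(a₁+a₂)) := by
    linear_combination lam^(2*a₂)*((starRingEnd ℂ) z')^2*h₁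
      + 2*lam^(a₁+a₂)*((starRingEnd ℂ) z')*((starRingEnd ℂ) w')*h₂
      + lam^(2*a₁)*((starRingEnd ℂ) w')^2*h₃
      + lam^(2*(a₁+a₂))*(z'*(starRingEnd ℂ) z'+w'*(starRingEnd ℂ) w'+1)*hs'C
  -- Norm computations
  have ht0 : 0 < normSq lam := normSq_pos.mpr hlam
  have hABsum : normSq (lam^a₁ * (starRingEnd ℂ) z * z' + lam^a₂ * (starRingEnd ℂ) w * w')
      + normSq (lam^a₁ * (starRingEnd ℂ) z * (starRingEnd ℂ) w'
                - lam^a₂ * (starRingEnd ℂ) w * (starRingEnd ℂ) z')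
      = normSq lam ^ a₁ * normSq z + normSq lam ^ a₂ * normSq w := by
    have h := lag_aux (lam^a₁ * (starRingEnd ℂ) z) (lam^a₂ * (starRingEnd ℂ) w) z' w'
    simpa [map_mul, map_pow, Complex.normSq_conj, hs'] using h
  have hA2Bsum : normSq (lam^a₂ * (starRingEnd ℂ) z' * z + lam^a₁ * (starRingEnd ℂ) w' * w)
      + normSq (lam^a₂ * (starRingEnd ℂ) z' * (starRingEnd ℂ) w
                - lam^a₁ * (starRingEnd ℂ) w' * (starRingEnd ℂ) z)
      = normSq lam ^ a₂ * normSq z' + normSq lam ^ a₁ * normSq w' := by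
    have h := lag_aux (lam^a₂ * (starRingEnd ℂ) z') (lam^a₁ * (starRingEnd ℂ) w') z w
    simpa [map_mul, map_pow, Complex.normSq_conj, hs] using h
  have hab1 : (1:ℝ) ≤ normSq (lam^a₁ * (starRingEnd ℂ) z * z' + lam^a₂ * (starRingEnd ℂ) w * w')
      + ‖μ'‖ * normSq (lam^a₁ * (starRingEnd ℂ) z * (starRingEnd ℂ) w'
                - lam^a₂ * (starRingEnd ℂ) w * (starRingEnd ℂ) z') := by
    set A := lam^a₁ * (starRingEnd ℂ) z * z' + lam^a₂ * (starRingEnd ℂ) w * w'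
    set B := lam^a₁ * (starRingEnd ℂ) z * (starRingEnd ℂ) w'
            - lam^a₂ * (starRingEnd ℂ) w * (starRingEnd ℂ) z'
    calc (1:ℝ) = ‖A^2 - μ'*B^2‖ := by rw [hKey]; simp
      _ ≤ ‖A^2‖ + ‖μ'*B^2‖ := by
          have h := norm_add_le (A^2) (-(μ'*B^2))
          rwa [← sub_eq_add_neg, norm_neg] at h
      _ = normSq A + ‖μ'‖ * normSq B := by
          rw [norm_mul, norm_pow, norm_pow, Complex.sq_norm, Complex.sq_norm]
  have hab2 : normSq lam ^ (a₁+a₂)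
      ≤ normSq (lam^a₂ * (starRingEnd ℂ) z' * z + lam^a₁ * (starRingEnd ℂ) w' * w)
      + ‖μ‖ * normSq (lam^a₂ * (starRingEnd ℂ) z' * (starRingEnd ℂ) w
             - lam^a₁ * (starRingEnd ℂ) w' * (starRingEnd ℂ) z) := by
    set A := lam^a₂ * (starRingEnd ℂ) z' * z + lam^a₁ * (starRingEnd ℂ) w' * w
    set B := lam^a₂ * (starRingEnd ℂ) z' * (starRingEnd ℂ) w
             - lam^a₁ * (starRingEnd ℂ) w' * (starRingEnd ℂ) z
    calc normSq lam ^ (a₁+a₂) = ‖A^2 - μ*B^2‖ := by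
          rw [hKey2, norm_pow, pow_mul, Complex.sq_norm]
      _ ≤ ‖A^2‖ + ‖μ*B^2‖ := by
          have h := norm_add_le (A^2) (-(μ*B^2))
          rwa [← sub_eq_add_neg, norm_neg] at h
      _ = normSq A + ‖μ‖ * normSq B := by
          rw [norm_mul, norm_pow, norm_pow, Complex.sq_norm, Complex.sq_norm]
  -- Part B : |lam| = 1
  have ht1 : normSq lam = 1 := by
    rcases lt_trichotomy (normSq lam) 1 with ht | ht | ht
    · exfalso
      have hp : normSq lam ^ a₁ ≤ normSq lam ^ a₂ := pow_le_pow_of_le_one ht0.le ht.le hle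
      have hp2 : normSq lam ^ a₂ < 1 := pow_lt_one₀ ht0.le ht h2.ne'
      have hBn := normSq_nonneg (lam^a₁ * (starRingEnd ℂ) z * (starRingEnd ℂ) w'
                  - lam^a₂ * (starRingEnd ℂ) w * (starRingEnd ℂ) z')
      nlinarith [normSq_nonneg z, normSq_nonneg w, hab1, hABsum, norm_nonneg μ']
    · exact ht
    · exfalso
      have hp : normSq lam ^ a₂ ≤ normSq lam ^ a₁ := pow_le_pow_right₀ ht.le hle
      have hp2 : (1:ℝ) < normSq lam ^ a₂ := one_lt_pow₀ ht h2.ne'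
      have hpadd : normSq lam ^ (a₁+a₂) = normSq lam ^ a₁ * normSq lam ^ a₂ := pow_add _ _ _
      have hBn := normSq_nonneg (lam^a₂ * (starRingEnd ℂ) z' * (starRingEnd ℂ) w
               - lam^a₁ * (starRingEnd ℂ) w' * (starRingEnd ℂ) z)
      nlinarith [normSq_nonneg z', normSq_nonneg w', hab2, hA2Bsum,
        norm_nonneg μ, pow_pos ht0 a₁, pow_pos ht0 a₂]
  -- consequences of |lam| = 1
  have hlc : lam * (starRingEnd ℂ) lam = 1 := by
    rw [Complex.mul_conj, ht1]; exact Complex.ofReal_one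
  have hl1 : lam^a₁ * ((starRingEnd ℂ) lam)^a₁ = 1 := by rw [← mul_pow, hlc, one_pow]
  have hl2 : lam^a₂ * ((starRingEnd ℂ) lam)^a₂ = 1 := by rw [← mul_pow, hlc, one_pow]
  -- Part C : B = 0 and A² = 1
  have hsum1 : normSq (lam^a₁ * (starRingEnd ℂ) z * z' + lam^a₂ * (starRingEnd ℂ) w * w')
      + normSq (lam^a₁ * (starRingEnd ℂ) z * (starRingEnd ℂ) w'
                - lam^a₂ * (starRingEnd ℂ) w * (starRingEnd ℂ) z') = 1 := by
    rw [hABsum, ht1, one_pow, one_pow, one_mul, one_mul, hs]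
  have hB0 : lam^a₁ * (starRingEnd ℂ) z * (starRingEnd ℂ) w'
      - lam^a₂ * (starRingEnd ℂ) w * (starRingEnd ℂ) z' = 0 := by
    refine normSq_eq_zero.mp (le_antisymm ?_ (normSq_nonneg _))
    nlinarith [hab1, hsum1, hμ', norm_nonneg μ',
      normSq_nonneg (lam^a₁ * (starRingEnd ℂ) z * (starRingEnd ℂ) w'
                - lam^a₂ * (starRingEnd ℂ) w * (starRingEnd ℂ) z')]
  have hA21 : (lam^a₁ * (starRingEnd ℂ) z * z' + lam^a₂ * (starRingEnd ℂ) w * w')^2 = 1 := by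
    linear_combination hKey + μ' * (lam^a₁ * (starRingEnd ℂ) z * (starRingEnd ℂ) w'
      - lam^a₂ * (starRingEnd ℂ) w * (starRingEnd ℂ) z') * hB0
  have hε : (lam^a₁ * (starRingEnd ℂ) z * z' + lam^a₂ * (starRingEnd ℂ) w * w') = 1
      ∨ (lam^a₁ * (starRingEnd ℂ) z * z' + lam^a₂ * (starRingEnd ℂ) w * w') = -1 := by
    have hf : ((lam^a₁ * (starRingEnd ℂ) z * z' + lam^a₂ * (starRingEnd ℂ) w * w') - 1)
        * ((lam^a₁ * (starRingEnd ℂ) z * z' + lam^a₂ * (starRingEnd ℂ) w * w') + 1) = 0 := by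
      linear_combination hA21
    rcases mul_eq_zero.mp hf with h | h
    · exact Or.inl (by linear_combination h)
    · exact Or.inr (by linear_combination h)
  refine ⟨hμeq, ?_⟩
  rcases hε with hA | hA
  · -- ε = 1
    have hAc : ((starRingEnd ℂ) lam)^a₁ * z * (starRingEnd ℂ) z'
        + ((starRingEnd ℂ) lam)^a₂ * w * (starRingEnd ℂ) w' = 1 := by
      have hc := congrArg (starRingEnd ℂ) hA
      simp only [map_add, map_mul, map_pow, Complex.conj_conj, map_one] at hc
      linear_combination hc
    have hz0 : normSq (z - lam^a₁ * z') + normSq (w - lam^a₂ * w') = 0 := by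
      have hC2 : ((normSq (z - lam^a₁ * z') : ℝ) : ℂ) + ((normSq (w - lam^a₂ * w') : ℝ) : ℂ) = 0 := by
        rw [← Complex.mul_conj, ← Complex.mul_conj]
        simp only [map_sub, map_mul, map_pow]
        linear_combination hsC + (z' * (starRingEnd ℂ) z')*hl1 + (w' * (starRingEnd ℂ) w')*hl2
          + hs'C - hA - hAc
      exact_mod_cast hC2
    have hn1 := normSq_nonneg (z - lam^a₁ * z')
    have hn2 := normSq_nonneg (w - lam^a₂ * w')
    have hz1 : z - lam^a₁ * z' = 0 := normSq_eq_zero.mp (by linarith)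
    have hw1 : w - lam^a₂ * w' = 0 := normSq_eq_zero.mp (by linarith)
    exact ⟨1, Or.inl rfl, by linear_combination hz1, by linear_combination hw1⟩
  · -- ε = -1
    have hAc : ((starRingEnd ℂ) lam)^a₁ * z * (starRingEnd ℂ) z'
        + ((starRingEnd ℂ) lam)^a₂ * w * (starRingEnd ℂ) w' = -1 := by
      have hc := congrArg (starRingEnd ℂ) hA
      simp only [map_add, map_mul, map_pow, Complex.conj_conj, map_one, map_neg] at hc
      linear_combination hc
    have hz0 : normSq (z + lam^a₁ * z') + normSq (w + lam^a₂ * w') = 0 := by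
      have hC2 : ((normSq (z + lam^a₁ * z') : ℝ) : ℂ) + ((normSq (w + lam^a₂ * w') : ℝ) : ℂ) = 0 := by
        rw [← Complex.mul_conj, ← Complex.mul_conj]
        simp only [map_add, map_mul, map_pow]
        linear_combination hsC + (z' * (starRingEnd ℂ) z')*hl1 + (w' * (starRingEnd ℂ) w')*hl2
          + hs'C + hA + hAc
      exact_mod_cast hC2
    have hn1 := normSq_nonneg (z + lam^a₁ * z')
    have hn2 := normSq_nonneg (w + lam^a₂ * w')
    have hz1 : z + lam^a₁ * z' = 0 := normSq_eq_zero.mp (by linarith)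
    have hw1 : w + lam^a₂ * w' = 0 := normSq_eq_zero.mp (by linarith)
    exact ⟨-1, Or.inr rfl, by linear_combination hz1, by linear_combination hw1⟩
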